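/- Correctness of the reduction from Q‖C_min to P‖C_min: Let p : Fin d → ℕ with p j ≥ 1 for all j, n : Fin d → ℕ, τ ≥ 1, speeds s : Fin τ → ℕ with s i ≥ 1 for all i, machine multiplicities mq : Fin τ → ℕ with ∑_i mq i ≥ 1, and a threshold ℓ ∈ ℕ. Set smax = max_i s i, S = ∑_j p j · n j, ℓ' = S + smax·ℓ + 1 and M = ∑_i mq i. Then the following are equivalent: (1) there exists an assignment x : (Σ i : Fin τ, Fin (mq i)) → Fin d → ℕ with ∑_{machines} x · j = n j for every j and ∑_j p j · x ⟨i,k⟩ j ≥ s i · ℓ for every machine ⟨i,k⟩; (2) there exists a function y : Fin M → (Fin d ⊕ Fin τ) → ℕ with ∑_{l} y l (inl j) = n j for every j, ∑_{l} y l (inr i) = mq i for every i, and for every l ∈ Fin M, ∑_j p j · y l (inl j) + ∑_i (ℓ' − s i · ℓ) · y l (inr i) ≥ ℓ'. -/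
import Mathlib

theorem q_cmin_to_p_cmin_reduction (d τ : ℕ) (hτ : 1 ≤ τ)
    (p : Fin d → ℕ) (hp : ∀ j, 1 ≤ p j) (n : Fin d → ℕ)
    (s : Fin τ → ℕ) (hs : ∀ i, 1 ≤ s i)
    (mq : Fin τ → ℕ) (hmq : 1 ≤ ∑ i, mq i) (ℓ : ℕ)
    (ℓ' : ℕ) (hℓ' : ℓ' = (∑ j, p j * n j) + Finset.univ.sup s * ℓ + 1) :
    (∃ x : (Σ i : Fin τ, Fin (mq i)) → Fin d → ℕ,
      (∀ j, ∑ mk, x mk j = n j) ∧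
      ∀ mk : Σ i : Fin τ, Fin (mq i), s mk.1 * ℓ ≤ ∑ j, p j * x mk j) ↔
    (∃ y : Fin (∑ i, mq i) → (Fin d ⊕ Fin τ) → ℕ,
      (∀ j, ∑ l, y l (Sum.inl j) = n j) ∧
      (∀ i, ∑ l, y l (Sum.inr i) = mq i) ∧
      ∀ l, ℓ' ≤ (∑ j, p j * y l (Sum.inl j)) +
        (∑ i, (ℓ' - s i * ℓ) * y l (Sum.inr i))) := by
  have hsub : ∀ i : Fin τ, s i * ℓ ≤ ℓ' := by
    intro i
    have h1 : s i ≤ Finset.univ.sup s := Finset.le_sup (Finset.mem_univ i)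
    have h2 : s i * ℓ ≤ Finset.univ.sup s * ℓ := Nat.mul_le_mul_right _ h1
    omega
  constructor
  · rintro ⟨x, hx1, hx2⟩
    have hcard : Fintype.card (Σ i : Fin τ, Fin (mq i)) = ∑ i, mq i := by simp
    let e : (Σ i : Fin τ, Fin (mq i)) ≃ Fin (∑ i, mq i) := Fintype.equivFinOfCardEq hcard
    refine ⟨fun l => Sum.elim (fun j => x (e.symm l) j)
      (fun i => if (e.symm l).1 = i then 1 else 0), ?_, ?_, ?_⟩
    · intro j
      simp only [Sum.elim_inl]
      rw [← Fintype.sum_equiv e (fun mk => x mk j) (fun l => x (e.symm l) j) (by simp)]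
      exact hx1 j
    · intro i
      simp only [Sum.elim_inr]
      rw [← Fintype.sum_equiv e (fun mk => if mk.1 = i then 1 else 0)
        (fun l => if (e.symm l).1 = i then 1 else 0) (by simp)]
      rw [← Finset.univ_sigma_univ, Finset.sum_sigma]
      simp [Finset.sum_ite_eq', apply_ite Finset.card]
    · intro l
      simp only [Sum.elim_inl, Sum.elim_inr]
      have h1 := hx2 (e.symm l)
      have h2 : (∑ i, (ℓ' - s i * ℓ) * (if (e.symm l).1 = i then 1 else 0))
          = ℓ' - s (e.symm l).1 * ℓ := by
        simp [mul_ite, Finset.sum_ite_eq]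
      simp only [h2]
      have := hsub (e.symm l).1
      omega
  · rintro ⟨y, hy1, hy2, hy3⟩
    have hyle : ∀ l j, y l (Sum.inl j) ≤ n j := by
      intro l j
      rw [← hy1 j]
      exact Finset.single_le_sum (f := fun l => y l (Sum.inl j))
        (fun _ _ => Nat.zero_le _) (Finset.mem_univ l)
    have hreal : ∀ l, ∑ j, p j * y l (Sum.inl j) ≤ ∑ j, p j * n j := by
      intro l
      exact Finset.sum_le_sum fun j _ => Nat.mul_le_mul_left _ (hyle l j)
    have hD1 : ∀ l, 1 ≤ ∑ i, y l (Sum.inr i) := by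
      intro l
      by_contra h
      have h0 : ∀ i, y l (Sum.inr i) = 0 := by
        intro i
        have : ∑ i, y l (Sum.inr i) = 0 := by omega
        exact Finset.sum_eq_zero_iff.mp this i (Finset.mem_univ i)
      have hh := hy3 l
      have hr := hreal l
      simp only [h0, mul_zero, Finset.sum_const_zero, add_zero] at hh
      omega
    have hDsum : ∑ l, ∑ i, y l (Sum.inr i) = ∑ i, mq i := by
      rw [Finset.sum_comm]
      exact Finset.sum_congr rfl fun i _ => hy2 i
    have hDone : ∀ l, ∑ i, y l (Sum.inr i) = 1 := by
      by_contra h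
      push_neg at h
      obtain ⟨l0, hl0⟩ := h
      have h2 : 2 ≤ ∑ i, y l0 (Sum.inr i) := by have := hD1 l0; omega
      have hlow : (∑ i, mq i) + 1 ≤ ∑ l, ∑ i, y l (Sum.inr i) := by
        calc (∑ i, mq i) + 1 = (∑ _l : Fin (∑ i, mq i), 1) + 1 := by simp
        _ ≤ ∑ l, ∑ i, y l (Sum.inr i) := by
            rw [← Finset.sum_erase_add _ _ (Finset.mem_univ l0),
                ← Finset.sum_erase_add _ (fun l => ∑ i, y l (Sum.inr i)) (Finset.mem_univ l0)]
            have : ∑ l ∈ Finset.univ.erase l0, (1:ℕ) ≤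
                ∑ l ∈ Finset.univ.erase l0, ∑ i, y l (Sum.inr i) :=
              Finset.sum_le_sum fun l _ => hD1 l
            omega
      omega
    have hflex : ∀ l, ∃ i, ∀ i', y l (Sum.inr i') = if i' = i then 1 else 0 := by
      intro l
      have h1 := hDone l
      have hex : ∃ i, 1 ≤ y l (Sum.inr i) := by
        by_contra h
        push_neg at h
        have : ∑ i, y l (Sum.inr i) = 0 :=
          Finset.sum_eq_zero fun i _ => by have := h i; omega
        omega
      obtain ⟨i, hi⟩ := hex
      refine ⟨i, fun i' => ?_⟩
      have herase : y l (Sum.inr i) + ∑ i' ∈ Finset.univ.erase i, y l (Sum.inr i') = 1 :=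
        (Finset.add_sum_erase Finset.univ (fun i' => y l (Sum.inr i'))
          (Finset.mem_univ i)).trans h1
      by_cases hii : i' = i
      · subst hii; simp; omega
      · have hz : ∑ i' ∈ Finset.univ.erase i, y l (Sum.inr i') = 0 := by omega
        have := Finset.sum_eq_zero_iff.mp hz i'
          (Finset.mem_erase.mpr ⟨hii, Finset.mem_univ i'⟩)
        simp [hii]; omega
    choose fl hfl using hflex
    have hfib : ∀ i, Fintype.card {l // fl l = i} = mq i := by
      intro i
      have h1 : ∑ l, y l (Sum.inr i) = ∑ l, if fl l = i then 1 else 0 :=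
        Finset.sum_congr rfl fun l _ => by
          rw [hfl l i]
          by_cases h : fl l = i
          · simp [h]
          · simp [h, Ne.symm h]
      rw [Fintype.card_subtype, Finset.card_filter, ← h1, hy2]
    let ei : ∀ i, {l // fl l = i} ≃ Fin (mq i) := fun i => Fintype.equivFinOfCardEq (hfib i)
    let E : (Σ i : Fin τ, Fin (mq i)) ≃ Fin (∑ i, mq i) :=
      (Equiv.sigmaCongrRight ei).symm.trans (Equiv.sigmaFiberEquiv fl)
    refine ⟨fun mk j => y (E mk) (Sum.inl j), ?_, ?_⟩
    · intro j
      exact (Fintype.sum_equiv E (fun mk => y (E mk) (Sum.inl j))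
        (fun l => y l (Sum.inl j)) (fun mk => rfl)).trans (hy1 j)
    · rintro ⟨i, k⟩
      show s i * ℓ ≤ ∑ j, p j * y (E ⟨i, k⟩) (Sum.inl j)
      have hEl : fl (E ⟨i, k⟩) = i := by
        show fl ((Equiv.sigmaFiberEquiv fl) ((Equiv.sigmaCongrRight ei).symm ⟨i, k⟩)) = i
        simp [Equiv.sigmaFiberEquiv]
        exact ((ei i).symm k).2
      set l := E ⟨i, k⟩ with hl
      have hh := hy3 l
      have h2 : (∑ i', (ℓ' - s i' * ℓ) * y l (Sum.inr i')) = ℓ' - s i * ℓ := by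
        have : ∀ i', y l (Sum.inr i') = if i' = i then 1 else 0 := by
          intro i'; rw [hfl l i', hEl]
        simp only [this]
        simp [mul_ite, Finset.sum_ite_eq']
      rw [h2] at hh
      have := hsub i
      omega
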